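/- For graphs G and H and positive integers m, n, the direct product M_m(G) × M_n(H) is a cover graph if and only if G or H is bipartite. -/

import Mathlib

open SimpleGraph

/-- A graph is a *cover graph* if it is the underlying graph of the Hasse diagram of a
partially ordered set, i.e. adjacency coincides with the (symmetrized) covering relation. -/
def SimpleGraph.IsCoverGraph {V : Type*} (G : SimpleGraph V) : Prop :=
  ∃ p : PartialOrder V, ∀ a b : V,
    G.Adj a b ↔ (@CovBy V p.toPreorder.toLT a b ∨ @CovBy V p.toPreorder.toLT b a)

/-- The direct (tensor/categorical) product of two simple graphs. -/
def SimpleGraph.tensorProd {α β : Type*} (G : SimpleGraph α) (H : SimpleGraph β) :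
    SimpleGraph (α × β) where
  Adj x y := G.Adj x.1 y.1 ∧ H.Adj x.2 y.2
  symm := ⟨fun _ _ h => ⟨h.1.symm, h.2.symm⟩⟩
  loopless := ⟨fun _ h => G.loopless.irrefl _ h.1⟩

/-- The generalized Mycielskian `M_m(G)`: levels `0,…,m` (each a copy of `V`), the edges of `G`
on level `0`, edges between consecutive levels induced by the edges of `G`, and a root `none`
adjacent to all of level `m`. -/
def SimpleGraph.Myc {V : Type*} (m : ℕ) (G : SimpleGraph V) :
    SimpleGraph (Option (Fin (m + 1) × V)) where
  Adj x y :=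
    match x, y with
    | some (i, j), some (k, l) =>
        G.Adj j l ∧ ((i.val = 0 ∧ k.val = 0) ∨ i.val + 1 = k.val ∨ k.val + 1 = i.val)
    | some (i, _), none => i.val = m
    | none, some (k, _) => k.val = m
    | none, none => False
  symm := by
    constructor
    rintro (_ | ⟨i, j⟩) (_ | ⟨k, l⟩) h
    · exact h
    · exact h
    · exact h
    · exact ⟨h.1.symm, by omega⟩
  loopless := by
    constructor
    rintro (_ | ⟨i, j⟩) h
    · exact h
    · exact G.loopless.irrefl j h.1

namespace MycCoverAux

open Finset

/-! ### A sufficient condition for being a cover graph -/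

section Cover

variable {V : Type*} (P : SimpleGraph V) (F : V → ℕ)

def CRel (u v : V) : Prop := P.Adj u v ∧ F u < F v

variable {P F}

lemma relRTG_mono {u v : V} (h : Relation.ReflTransGen (CRel P F) u v) : F u ≤ F v := by
  induction h with
  | refl => exact le_refl _
  | tail _ h ih => exact le_trans ih (le_of_lt h.2)

lemma relTG_strict {u v : V} (h : Relation.TransGen (CRel P F) u v) : F u < F v := by
  obtain ⟨c, hc, hcb⟩ := Relation.TransGen.head'_iff.mp h
  exact lt_of_lt_of_le hc.2 (relRTG_mono hcb)

variable (P F) in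
def cOrd : PartialOrder V where
  le := Relation.ReflTransGen (CRel P F)
  le_refl _ := Relation.ReflTransGen.refl
  le_trans _ _ _ hab hbc := Relation.ReflTransGen.trans hab hbc
  le_antisymm a b hab hba := by
    rcases Relation.reflTransGen_iff_eq_or_transGen.mp hab with h | h
    · exact h.symm
    rcases Relation.reflTransGen_iff_eq_or_transGen.mp hba with h' | h'
    · exact h'
    have := relTG_strict h
    have := relTG_strict h'
    omega

lemma cOrd_lt_iff {a b : V} :
    (@LT.lt V (cOrd P F).toPreorder.toLT a b) ↔ Relation.TransGen (CRel P F) a b := by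
  show (_ ∧ _) ↔ _
  constructor
  · rintro ⟨hab, hnba⟩
    rcases Relation.reflTransGen_iff_eq_or_transGen.mp hab with h | h
    · exact absurd (h ▸ Relation.ReflTransGen.refl) hnba
    · exact h
  · intro h
    refine ⟨h.to_reflTransGen, fun hba => ?_⟩
    have h1 := relTG_strict h
    have h2 := relRTG_mono hba
    omega

lemma cover_of_gradelike
    (h1 : ∀ u v, P.Adj u v → F u ≠ F v)
    (h2 : ∀ u v, P.Adj u v → F u < F v → F v ≤ F u + 2)
    (h3 : ∀ u v w, P.Adj u v → F v = F u + 2 → P.Adj u w → P.Adj w v → F w ≠ F u + 1) :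
    P.IsCoverGraph := by
  classical
  refine ⟨cOrd P F, fun a b => ?_⟩
  have key : ∀ u v, P.Adj u v → F u < F v → @CovBy V (cOrd P F).toPreorder.toLT u v := by
    intro u v huv hF
    constructor
    · exact cOrd_lt_iff.mpr (Relation.TransGen.single ⟨huv, hF⟩)
    · intro c huc hcv
      replace huc := Relation.TransGen.head'_iff.mp (cOrd_lt_iff.mp huc)
      replace hcv := Relation.TransGen.head'_iff.mp (cOrd_lt_iff.mp hcv)
      obtain ⟨d, hud, hdc⟩ := huc
      obtain ⟨e, hce, hev⟩ := hcv
      have hFuc : F u < F c := lt_of_lt_of_le hud.2 (relRTG_mono hdc)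
      have hFcv : F c < F v := lt_of_lt_of_le hce.2 (relRTG_mono hev)
      have hb2 := h2 u v huv hF
      have hFv : F v = F u + 2 := by omega
      have hFc : F c = F u + 1 := by omega
      have hdceq : d = c := by
        rcases Relation.reflTransGen_iff_eq_or_transGen.mp hdc with h | h
        · exact h.symm
        · have := relTG_strict h
          have := hud.2
          omega
      have heveq : e = v := by
        rcases Relation.reflTransGen_iff_eq_or_transGen.mp hev with h | h
        · exact h.symm
        · have := relTG_strict h
          have := hce.2
          omega
      exact h3 u v c huv hFv (hdceq ▸ hud.1) (heveq ▸ hce.1) hFc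
  constructor
  · intro hadj
    rcases Nat.lt_or_ge (F a) (F b) with h | h
    · exact Or.inl (key a b hadj h)
    · have : F b < F a := lt_of_le_of_ne h (h1 a b hadj).symm
      exact Or.inr (key b a hadj.symm this)
  · intro hcov
    have main : ∀ u v, @CovBy V (cOrd P F).toPreorder.toLT u v → P.Adj u v := by
      intro u v hc
      obtain ⟨d, hud, hdv⟩ := Relation.TransGen.head'_iff.mp (cOrd_lt_iff.mp hc.1)
      rcases Relation.reflTransGen_iff_eq_or_transGen.mp hdv with h | h
      · exact h ▸ hud.1
      · exfalso
        exact hc.2 (cOrd_lt_iff.mpr (Relation.TransGen.single hud)) (cOrd_lt_iff.mpr h)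
    rcases hcov with h | h
    · exact main a b h
    · exact (main b a h).symm

end Cover

/-! ### The grading function on a Mycielskian of a 2-colored graph -/

section Phi

variable {α : Type*} {G : SimpleGraph α} {m : ℕ}

def phi (m : ℕ) (C : α → Fin 2) : Option (Fin (m + 1) × α) → ℕ
  | none => m + 2
  | some (i, v) => if i.val = 0 then (C v).val else i.val + 1

variable (C : G.Coloring (Fin 2)) (hm : 1 ≤ m)

include hm in
lemma phi_A : ∀ x y, (Myc m G).Adj x y →
    phi m C x ≠ phi m C y ∧ (phi m C x < phi m C y → phi m C y ≤ phi m C x + 2) := by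
  rintro (_ | ⟨i, j⟩) (_ | ⟨k, l⟩) h
  · exact absurd h (by simp [Myc])
  · have hk : k.val = m := h
    have : (C l).val < 2 := (C l).is_lt
    simp only [phi]
    split_ifs <;> omega
  · have hi : i.val = m := h
    simp only [phi]
    split_ifs <;> omega
  · obtain ⟨hadj, hlev⟩ := h
    have hC : (C j).val ≠ (C l).val := by
      intro hc
      exact C.valid hadj (Fin.ext hc)
    have c1 : (C j).val < 2 := (C j).is_lt
    have c2 : (C l).val < 2 := (C l).is_lt
    simp only [phi]
    rcases hlev with ⟨h0, h0'⟩ | h1 | h1 <;> split_ifs <;> omega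

include hm in
lemma phi_B : ∀ x y w, (Myc m G).Adj x y → phi m C y = phi m C x + 2 →
    (Myc m G).Adj x w → (Myc m G).Adj w y → phi m C w ≠ phi m C x + 1 := by
  rintro (_ | ⟨i, j⟩) (_ | ⟨k, l⟩) w h h2 hxw hwy
  · exact absurd h (by simp [Myc])
  · exfalso
    have hk : k.val = m := h
    have : (C l).val < 2 := (C l).is_lt
    simp only [phi] at h2
    split_ifs at h2 <;> omega
  · exfalso
    have hi : i.val = m := h
    simp only [phi] at h2
    split_ifs at h2 <;> omega
  · obtain ⟨hadj, hlev⟩ := h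
    have c1 : (C j).val < 2 := (C j).is_lt
    have c2 : (C l).val < 2 := (C l).is_lt
    have hshape : i.val = 0 ∧ (C j).val = 0 ∧ k.val = 1 := by
      have hC : (C j).val ≠ (C l).val := fun hc => C.valid hadj (Fin.ext hc)
      simp only [phi] at h2
      rcases hlev with ⟨h0, h0'⟩ | h1 | h1 <;> split_ifs at h2 <;> omega
    obtain ⟨hi0, hCj, hk1⟩ := hshape
    intro hw
    simp only [phi] at hw
    rw [if_pos hi0, hCj] at hw
    obtain (_ | ⟨iw, b⟩) := w
    · simp only [phi] at hw; omega
    · simp only [phi] at hw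
      by_cases hw0 : iw.val = 0
      · rw [if_pos hw0] at hw
        have hjb : G.Adj j b := hxw.1
        have hbl : G.Adj b l := hwy.1
        have h2' : (C b) ≠ (C l) := C.valid hbl
        have h3 : (C j) ≠ (C l) := C.valid hadj
        have : (C l).val = 1 := by
          have : (C j).val ≠ (C l).val := fun hc => h3 (Fin.ext hc)
          omega
        have : (C b).val ≠ (C l).val := fun hc => h2' (Fin.ext hc)
        omega
      · rw [if_neg hw0] at hw; omega

end Phi

/-! ### Signed edge sums in a Hasse diagram -/

section NotCover

variable {V : Type*} (P : SimpleGraph V) [Ord : PartialOrder V]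

noncomputable def tval (a b : V) : ℤ := by classical exact if a < b then 1 else -1

variable {P}
variable (hp : ∀ a b : V, P.Adj a b ↔ a ⋖ b ∨ b ⋖ a)

lemma tval_eq_one {a b : V} (h : a < b) : tval a b = 1 := by simp [tval, h]
lemma tval_eq_neg {a b : V} (h : b < a) : tval a b = -1 := by
  simp [tval, asymm h]

include hp in
lemma adj_lt {a b : V} (h : P.Adj a b) : a < b ∨ b < a := by
  rcases (hp a b).mp h with h' | h'
  · exact Or.inl h'.1
  · exact Or.inr h'.1

include hp in
lemma tval_antisymm {a b : V} (h : P.Adj a b) : tval a b = - tval b a := by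
  rcases adj_lt hp h with h' | h'
  · simp [tval_eq_one h', tval_eq_neg h']
  · simp [tval_eq_neg h', tval_eq_one h']

include hp in
lemma chain3 {a b c d : V} (hab : a < b) (hbc : b < c) (hcd : c < d) (had : P.Adj a d) :
    False := by
  rcases (hp a d).mp had with h | h
  · exact h.2 hab (lt_trans hbc hcd)
  · exact lt_irrefl a (lt_trans (lt_trans (lt_trans hab hbc) hcd) h.1)

include hp in
lemma square {a b c d : V} (hab : P.Adj a b) (hbc : P.Adj b c) (hcd : P.Adj c d)
    (hda : P.Adj d a) : tval a b + tval b c + tval c d + tval d a = 0 := by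
  rcases adj_lt hp hab with h1 | h1 <;>
  rcases adj_lt hp hbc with h2 | h2 <;>
  rcases adj_lt hp hcd with h3 | h3 <;>
  rcases adj_lt hp hda with h4 | h4
  · exact absurd (chain3 hp h1 h2 h3 hda.symm) not_false
  · exact absurd (chain3 hp h1 h2 h3 hda.symm) not_false
  · exact absurd (chain3 hp h4 h1 h2 hcd.symm) not_false
  · rw [tval_eq_one h1, tval_eq_one h2, tval_eq_neg h3, tval_eq_neg h4]; norm_num
  · exact absurd (chain3 hp h3 h4 h1 hbc.symm) not_false
  · rw [tval_eq_one h1, tval_eq_neg h2, tval_eq_one h3, tval_eq_neg h4]; norm_num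
  · rw [tval_eq_one h1, tval_eq_neg h2, tval_eq_neg h3, tval_eq_one h4]; norm_num
  · exact absurd (chain3 hp h4 h3 h2 hab) not_false
  · exact absurd (chain3 hp h2 h3 h4 hab.symm) not_false
  · rw [tval_eq_neg h1, tval_eq_one h2, tval_eq_one h3, tval_eq_neg h4]; norm_num
  · rw [tval_eq_neg h1, tval_eq_one h2, tval_eq_neg h3, tval_eq_one h4]; norm_num
  · exact absurd (chain3 hp h1 h4 h3 hbc) not_false
  · rw [tval_eq_neg h1, tval_eq_neg h2, tval_eq_one h3, tval_eq_one h4]; norm_num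
  · exact absurd (chain3 hp h2 h1 h4 hcd) not_false
  · exact absurd (chain3 hp h3 h2 h1 hda) not_false
  · exact absurd (chain3 hp h4 h3 h2 hab) not_false

/-- signed sum of `tval` along a length-`ℓ` walk given by `f` -/
noncomputable def ssum (ℓ : ℕ) (f : ℕ → V) : ℤ :=
  ∑ i ∈ range ℓ, tval (f i) (f (i + 1))

lemma ssum_congr {ℓ : ℕ} {f g : ℕ → V} (h : ∀ i ≤ ℓ, f i = g i) :
    ssum ℓ f = ssum ℓ g := by
  unfold ssum
  refine Finset.sum_congr rfl fun i hi => ?_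
  rw [mem_range] at hi
  rw [h i (by omega), h (i + 1) (by omega)]

lemma ssum_parity (ℓ : ℕ) (f : ℕ → V) : ((ssum ℓ f : ℤ) : ZMod 2) = (ℓ : ZMod 2) := by
  unfold ssum
  push_cast
  have : ∀ i ∈ range ℓ, ((tval (f i) (f (i + 1)) : ℤ) : ZMod 2) = 1 := by
    intro i _
    unfold tval
    split_ifs <;> decide
  rw [Finset.sum_congr rfl this]
  simp

include hp in
lemma ssum_reverse (ℓ : ℕ) (f : ℕ → V) (hf : ∀ i < ℓ, P.Adj (f i) (f (i + 1))) :
    ssum ℓ (fun i => f (ℓ - i)) = - ssum ℓ f := by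
  unfold ssum
  rw [← Finset.sum_range_reflect]
  rw [← Finset.sum_neg_distrib]
  refine Finset.sum_congr rfl fun i hi => ?_
  rw [mem_range] at hi
  have e1 : ℓ - (ℓ - 1 - i) = i + 1 := by omega
  have e2 : ℓ - (ℓ - 1 - i + 1) = i := by omega
  show tval (f (ℓ - (ℓ - 1 - i))) (f (ℓ - (ℓ - 1 - i + 1))) = - tval (f i) (f (i + 1))
  rw [e1, e2, tval_antisymm hp (hf i hi).symm]

include hp in
lemma ssum_update {ℓ : ℕ} {f : ℕ → V} (hf : ∀ i < ℓ, P.Adj (f i) (f (i + 1)))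
    {i₀ : ℕ} (h1 : 1 ≤ i₀) (h2 : i₀ < ℓ) {v : V}
    (hl : P.Adj (f (i₀ - 1)) v) (hr : P.Adj v (f (i₀ + 1))) :
    ssum ℓ (Function.update f i₀ v) = ssum ℓ f := by
  classical
  unfold ssum
  have key : ∀ i ∈ range ℓ, i ≠ i₀ - 1 → i ≠ i₀ →
      tval (Function.update f i₀ v i) (Function.update f i₀ v (i + 1)) =
      tval (f i) (f (i + 1)) := by
    intro i _ hne1 hne2
    rw [Function.update_of_ne hne2, Function.update_of_ne (by omega)]
  have hsub : {i₀ - 1, i₀} ⊆ range ℓ := by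
    intro x hx
    simp only [mem_insert, mem_singleton] at hx
    rw [mem_range]; omega
  have hdecomp : ∀ g : ℕ → ℤ, ∑ i ∈ range ℓ, g i =
      g (i₀ - 1) + g i₀ + ∑ i ∈ range ℓ \ {i₀ - 1, i₀}, g i := by
    intro g
    rw [← Finset.sum_sdiff hsub, Finset.sum_insert (by simp; omega), Finset.sum_singleton]
    ring
  rw [hdecomp fun i => tval (Function.update f i₀ v i) (Function.update f i₀ v (i + 1)),
      hdecomp fun i => tval (f i) (f (i + 1))]
  have hrest : ∑ i ∈ range ℓ \ {i₀ - 1, i₀},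
      tval (Function.update f i₀ v i) (Function.update f i₀ v (i + 1)) =
      ∑ i ∈ range ℓ \ {i₀ - 1, i₀}, tval (f i) (f (i + 1)) := by
    refine Finset.sum_congr rfl fun i hi => ?_
    rw [Finset.mem_sdiff] at hi
    simp only [mem_insert, mem_singleton] at hi
    exact key i hi.1 (fun h => hi.2 (Or.inl h)) (fun h => hi.2 (Or.inr h))
  rw [hrest]
  have e0 : i₀ - 1 + 1 = i₀ := by omega
  have u1 : Function.update f i₀ v (i₀ - 1) = f (i₀ - 1) :=
    Function.update_of_ne (by omega) _ _
  have u2 : Function.update f i₀ v i₀ = v := Function.update_self _ _ _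
  have u3 : Function.update f i₀ v (i₀ + 1) = f (i₀ + 1) :=
    Function.update_of_ne (by omega) _ _
  rw [e0, u1, u2, u3]
  have hab : P.Adj (f (i₀ - 1)) (f i₀) := by
    have := hf (i₀ - 1) (by omega)
    rwa [e0] at this
  have hbc : P.Adj (f i₀) (f (i₀ + 1)) := hf i₀ h2
  have hsq := square hp hab hbc hr.symm hl.symm
  have t1 := tval_antisymm hp hl
  have t2 := tval_antisymm hp hr
  linarith

/-! ### Walk reconfiguration: sliding a bouncing walk around an odd closed walk -/

/-- the bouncing walk -/
def bnc {α' : Type*} (x y : α') (i : ℕ) : α' := if i % 2 = 1 then x else y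

section Phases

variable {α' : Type*} {G' : SimpleGraph α'} {ℓ : ℕ}
variable {W : (ℕ → α') → ℕ → V}
variable (hW1 : ∀ γ γ' : ℕ → α', ∀ i, γ i = γ' i → W γ i = W γ' i)
variable (hW2 : ∀ γ : ℕ → α', (∀ i, 1 ≤ i → i + 1 ≤ ℓ - 1 → G'.Adj (γ i) (γ (i + 1))) →
    ∀ i < ℓ, P.Adj (W γ i) (W γ (i + 1)))
variable (hW3 : ∀ γ γ' : ℕ → α', W γ 0 = W γ' 0 ∧ W γ ℓ = W γ' ℓ)
variable (hodd : ℓ % 2 = 1) (hl3 : 3 ≤ ℓ)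

include hp hW1 hW2 hW3 hodd hl3 in
lemma phase_odd {x x' y : α'} (hxy : G'.Adj x y) (hx'y : G'.Adj x' y) :
    ssum ℓ (W (bnc x y)) = ssum ℓ (W (bnc x' y)) := by
  classical
  set mix : ℕ → ℕ → α' := fun k i => if i % 2 = 1 ∧ i < 2 * k then x' else bnc x y i with hmix
  have hmadj : ∀ k, ∀ i, 1 ≤ i → i + 1 ≤ ℓ - 1 → G'.Adj (mix k i) (mix k (i + 1)) := by
    intro k i _ _
    simp only [hmix, bnc]
    split_ifs <;> first | exact hxy | exact hx'y | exact hxy.symm | exact hx'y.symm | omega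
  have mixstep : ∀ k i, i ≠ 2 * k + 1 → mix k i = mix (k + 1) i := by
    intro k i hne
    simp only [hmix]
    split_ifs <;> first | rfl | omega
  have main : ∀ k, 2 * k ≤ ℓ - 1 → ssum ℓ (W (mix k)) = ssum ℓ (W (bnc x y)) := by
    intro k
    induction k with
    | zero =>
      intro _
      refine ssum_congr fun i _ => hW1 _ _ _ ?_
      simp [hmix]
    | succ k ih =>
      intro hk
      have hk' : 2 * k ≤ ℓ - 1 := by omega
      rw [← ih hk']
      have hlt : 2 * k + 1 < ℓ := by omega
      have hupd : W (mix (k + 1)) =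
          Function.update (W (mix k)) (2 * k + 1) (W (mix (k + 1)) (2 * k + 1)) := by
        funext i
        rcases eq_or_ne i (2 * k + 1) with rfl | hne
        · rw [Function.update_self]
        · rw [Function.update_of_ne hne]
          exact (hW1 _ _ _ (mixstep k i hne)).symm
      rw [hupd]
      have hadjk := hW2 (mix k) (hmadj k)
      have hadjk1 := hW2 (mix (k + 1)) (hmadj (k + 1))
      have hl' : P.Adj (W (mix k) (2 * k + 1 - 1)) (W (mix (k + 1)) (2 * k + 1)) := by
        have h := hadjk1 (2 * k) (by omega)
        have e : W (mix (k + 1)) (2 * k) = W (mix k) (2 * k) :=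
          (hW1 _ _ _ (mixstep k (2 * k) (by omega))).symm
        rw [e] at h
        have e2 : 2 * k + 1 - 1 = 2 * k := by omega
        rwa [e2]
      have hr' : P.Adj (W (mix (k + 1)) (2 * k + 1)) (W (mix k) (2 * k + 1 + 1)) := by
        have h := hadjk1 (2 * k + 1) hlt
        have e : W (mix (k + 1)) (2 * k + 2) = W (mix k) (2 * k + 2) :=
          (hW1 _ _ _ (mixstep k (2 * k + 2) (by omega))).symm
        rwa [e] at h
      exact ssum_update hp hadjk (by omega) hlt hl' hr'
  have hKbound : 2 * ((ℓ - 1) / 2) ≤ ℓ - 1 := by omega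
  rw [← main ((ℓ - 1) / 2) hKbound]
  refine ssum_congr fun i hi => ?_
  rcases eq_or_ne i ℓ with rfl | hne
  · exact (hW3 _ _).2
  · refine hW1 _ _ _ ?_
    simp only [hmix, bnc]
    split_ifs <;> first | rfl | omega

include hp hW1 hW2 hW3 hodd hl3 in
lemma phase_even {x y y' : α'} (hxy : G'.Adj x y) (hxy' : G'.Adj x y') :
    ssum ℓ (W (bnc x y)) = ssum ℓ (W (bnc x y')) := by
  classical
  set mix : ℕ → ℕ → α' := fun k i =>
    if i % 2 = 0 ∧ 1 ≤ i ∧ i ≤ 2 * k then y' else bnc x y i with hmix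
  have hmadj : ∀ k, ∀ i, 1 ≤ i → i + 1 ≤ ℓ - 1 → G'.Adj (mix k i) (mix k (i + 1)) := by
    intro k i _ _
    simp only [hmix, bnc]
    split_ifs <;> first | exact hxy | exact hxy' | exact hxy.symm | exact hxy'.symm | omega
  have mixstep : ∀ k i, i ≠ 2 * k + 2 → mix k i = mix (k + 1) i := by
    intro k i hne
    simp only [hmix]
    split_ifs <;> first | rfl | omega
  have main : ∀ k, 2 * k ≤ ℓ - 1 → ssum ℓ (W (mix k)) = ssum ℓ (W (bnc x y)) := by
    intro k
    induction k with
    | zero =>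
      intro _
      refine ssum_congr fun i _ => hW1 _ _ _ ?_
      simp only [hmix]
      split_ifs <;> first | rfl | omega
    | succ k ih =>
      intro hk
      have hk' : 2 * k ≤ ℓ - 1 := by omega
      rw [← ih hk']
      have hlt : 2 * k + 2 < ℓ := by omega
      have hupd : W (mix (k + 1)) =
          Function.update (W (mix k)) (2 * k + 2) (W (mix (k + 1)) (2 * k + 2)) := by
        funext i
        rcases eq_or_ne i (2 * k + 2) with rfl | hne
        · rw [Function.update_self]
        · rw [Function.update_of_ne hne]
          exact (hW1 _ _ _ (mixstep k i hne)).symm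
      rw [hupd]
      have hadjk := hW2 (mix k) (hmadj k)
      have hadjk1 := hW2 (mix (k + 1)) (hmadj (k + 1))
      have hl' : P.Adj (W (mix k) (2 * k + 2 - 1)) (W (mix (k + 1)) (2 * k + 2)) := by
        have h := hadjk1 (2 * k + 1) (by omega)
        have e : W (mix (k + 1)) (2 * k + 1) = W (mix k) (2 * k + 1) :=
          (hW1 _ _ _ (mixstep k (2 * k + 1) (by omega))).symm
        rw [e] at h
        have e2 : 2 * k + 2 - 1 = 2 * k + 1 := by omega
        rwa [e2]
      have hr' : P.Adj (W (mix (k + 1)) (2 * k + 2)) (W (mix k) (2 * k + 2 + 1)) := by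
        have h := hadjk1 (2 * k + 2) hlt
        have e : W (mix (k + 1)) (2 * k + 3) = W (mix k) (2 * k + 3) :=
          (hW1 _ _ _ (mixstep k (2 * k + 3) (by omega))).symm
        rwa [e] at h
      exact ssum_update hp hadjk (by omega) hlt hl' hr'
  have hKbound : 2 * ((ℓ - 1) / 2) ≤ ℓ - 1 := by omega
  rw [← main ((ℓ - 1) / 2) hKbound]
  refine ssum_congr fun i hi => ?_
  rcases eq_or_ne i 0 with rfl | hne
  · exact (hW3 _ _).1
  · refine hW1 _ _ _ ?_
    simp only [hmix, bnc]
    split_ifs <;> first | rfl | omega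

include hp hW1 hW2 hW3 hodd hl3 in
lemma crawl {a : ℕ} {g : ℕ → α'} (ha : a % 2 = 1)
    (hg : ∀ i < a, G'.Adj (g i) (g (i + 1))) (hcl : g a = g 0) :
    ssum ℓ (W (bnc (g 0) (g 1))) = ssum ℓ (W (bnc (g 1) (g 0))) := by
  have main : ∀ k, 2 * k + 1 ≤ a →
      ssum ℓ (W (bnc (g (2 * k)) (g (2 * k + 1)))) = ssum ℓ (W (bnc (g 0) (g 1))) := by
    intro k
    induction k with
    | zero => intro _; rfl
    | succ k ih =>
      intro hk
      have hk' : 2 * k + 1 ≤ a := by omega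
      rw [← ih hk']
      have h1 : G'.Adj (g (2 * k)) (g (2 * k + 1)) := hg _ (by omega)
      have h2 : G'.Adj (g (2 * k + 2)) (g (2 * k + 1)) := (hg _ (by omega)).symm
      have h3 : G'.Adj (g (2 * k + 2)) (g (2 * k + 3)) := hg _ (by omega)
      have e2 : 2 * (k + 1) + 1 = 2 * k + 3 := by omega
      have e1 : 2 * (k + 1) = 2 * k + 2 := by omega
      rw [e2, e1]
      rw [← phase_even hp hW1 hW2 hW3 hodd hl3 h2 h3]
      exact (phase_odd hp hW1 hW2 hW3 hodd hl3 h1 h2).symm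
  have hK : 2 * ((a - 1) / 2) + 1 ≤ a := by omega
  have hfin := main ((a - 1) / 2) hK
  have e2 : 2 * ((a - 1) / 2) + 1 = a := by omega
  have e1 : 2 * ((a - 1) / 2) = a - 1 := by omega
  rw [e2, e1, hcl] at hfin
  rw [← hfin]
  have hA1 : G'.Adj (g (a - 1)) (g 0) := by
    have := hg (a - 1) (by omega)
    have e : a - 1 + 1 = a := by omega
    rw [e, hcl] at this
    exact this
  have hA2 : G'.Adj (g 1) (g 0) := (hg 0 (by omega)).symm
  exact phase_odd hp hW1 hW2 hW3 hodd hl3 hA1 hA2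

end Phases

end NotCover

/-! ### The standard cone walks in a Mycielskian -/

section Pat

variable {α : Type*}

def lev (m ℓ i : ℕ) : ℕ := max ((m + 1) - i) ((m + 1) - (ℓ - i))

def pat (m ℓ : ℕ) (γ : ℕ → α) (i : ℕ) : Option (Fin (m + 1) × α) :=
  if i = 0 ∨ i = ℓ then none
  else some (⟨min m (lev m ℓ i), by omega⟩, γ i)

variable {G : SimpleGraph α} {m ℓ : ℕ}

lemma pat_ptwise (γ γ' : ℕ → α) (i : ℕ) (h : γ i = γ' i) :
    pat m ℓ γ i = pat m ℓ γ' i := by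
  unfold pat
  split_ifs with h'
  · rfl
  · rw [h]

lemma pat_adj (hℓ : 2 * m + 3 ≤ ℓ) (γ : ℕ → α)
    (hγ : ∀ i, 1 ≤ i → i + 1 ≤ ℓ - 1 → G.Adj (γ i) (γ (i + 1))) :
    ∀ i < ℓ, (Myc m G).Adj (pat m ℓ γ i) (pat m ℓ γ (i + 1)) := by
  intro i hi
  rcases eq_or_ne i 0 with rfl | h0
  · have h1 : pat m ℓ γ 0 = none := by unfold pat; rw [if_pos (Or.inl rfl)]
    have h2 : pat m ℓ γ 1 = some (⟨min m (lev m ℓ 1), by omega⟩, γ 1) := by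
      unfold pat; rw [if_neg (by omega)]
    rw [h1, h2]
    show (min m (lev m ℓ 1) : ℕ) = m
    unfold lev; omega
  rcases eq_or_ne (i + 1) ℓ with hL | hL
  · have h1 : pat m ℓ γ i = some (⟨min m (lev m ℓ i), by omega⟩, γ i) := by
      unfold pat; rw [if_neg (by omega)]
    have h2 : pat m ℓ γ (i + 1) = none := by unfold pat; rw [if_pos (Or.inr hL)]
    rw [h1, h2]
    show (min m (lev m ℓ i) : ℕ) = m
    unfold lev; omega
  · have h1 : pat m ℓ γ i = some (⟨min m (lev m ℓ i), by omega⟩, γ i) := by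
      unfold pat; rw [if_neg (by omega)]
    have h2 : pat m ℓ γ (i + 1) = some (⟨min m (lev m ℓ (i + 1)), by omega⟩, γ (i + 1)) := by
      unfold pat; rw [if_neg (by omega)]
    rw [h1, h2]
    refine ⟨hγ i (by omega) (by omega), ?_⟩
    show (min m (lev m ℓ i) = 0 ∧ min m (lev m ℓ (i + 1)) = 0) ∨
      min m (lev m ℓ i) + 1 = min m (lev m ℓ (i + 1)) ∨
      min m (lev m ℓ (i + 1)) + 1 = min m (lev m ℓ i)
    unfold lev; omega

lemma pat_zero (γ : ℕ → α) : pat m ℓ γ 0 = none := by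
  unfold pat; rw [if_pos (Or.inl rfl)]

lemma pat_last (γ : ℕ → α) : pat m ℓ γ ℓ = none := by
  unfold pat; rw [if_pos (Or.inr rfl)]

lemma pat_reflect (hℓ : 1 ≤ ℓ) (γ : ℕ → α) (i : ℕ) (hi : i ≤ ℓ) :
    pat m ℓ γ (ℓ - i) = pat m ℓ (fun j => γ (ℓ - j)) i := by
  unfold pat
  by_cases h : i = 0 ∨ i = ℓ
  · rw [if_pos h, if_pos (by omega)]
  · push_neg at h
    rw [if_neg (by omega), if_neg (by omega)]
    have hlev : lev m ℓ (ℓ - i) = lev m ℓ i := by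
      unfold lev
      have e : ℓ - (ℓ - i) = i := by omega
      rw [e]
      exact max_comm _ _
    simp only [hlev]

end Pat

/-! ### Odd closed walks in non-bipartite graphs -/

lemma bnc_adj {κ : Type*} {K : SimpleGraph κ} {x y : κ} (hxy : K.Adj x y) :
    ∀ i : ℕ, K.Adj (bnc x y i) (bnc x y (i + 1)) := by
  intro i
  unfold bnc
  split_ifs <;> first | exact hxy | exact hxy.symm | omega

lemma parity_unique {α : Type*} {G : SimpleGraph α}
    (heven : ∀ (u : α) (w : G.Walk u u), Even w.length)
    {u v : α} (p q : G.Walk u v) : p.length % 2 = q.length % 2 := by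
  have := heven u (p.append q.reverse)
  rw [SimpleGraph.Walk.length_append, SimpleGraph.Walk.length_reverse, Nat.even_iff] at this
  omega

lemma exists_odd_closed_walk {α : Type*} {G : SimpleGraph α} (h : ¬ G.Colorable 2) :
    ∃ (a : ℕ) (g : ℕ → α), a % 2 = 1 ∧ g a = g 0 ∧ ∀ i < a, G.Adj (g i) (g (i + 1)) := by
  classical
  by_contra hno
  apply h
  have heven : ∀ (u : α) (w : G.Walk u u), Even w.length := by
    intro u w
    by_contra hodd
    rw [Nat.even_iff] at hodd
    refine hno ⟨w.length, fun i => w.getVert i, by omega, ?_, ?_⟩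
    · show w.getVert w.length = w.getVert 0
      rw [SimpleGraph.Walk.getVert_length, SimpleGraph.Walk.getVert_zero]
    · intro i hi
      exact w.adj_getVert_succ hi
  let base : α → α := fun v => (G.connectedComponentMk v).out
  have hreach : ∀ v, G.Reachable v (base v) := by
    intro v
    apply SimpleGraph.ConnectedComponent.exact
    exact (Quot.out_eq _).symm
  let wk : ∀ v, G.Walk v (base v) := fun v => (hreach v).some
  refine ⟨SimpleGraph.Coloring.mk (fun v => ⟨(wk v).length % 2, by omega⟩) ?_⟩
  intro u v hadj hco
  have hbase : base v = base u := by
    show (G.connectedComponentMk v).out = (G.connectedComponentMk u).out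
    rw [SimpleGraph.ConnectedComponent.connectedComponentMk_eq_of_adj hadj]
  have hlen : ((wk u).length) % 2 = ((wk v).length) % 2 := by
    have := congrArg Fin.val hco
    simpa using this
  have hpar := parity_unique heven (wk u) (SimpleGraph.Walk.cons hadj ((wk v).copy rfl hbase))
  rw [SimpleGraph.Walk.length_cons, SimpleGraph.Walk.length_copy] at hpar
  omega

end MycCoverAux

open MycCoverAux

/-- For graphs `G` and `H` and positive integers `m, n`, the direct product
`M_m(G) × M_n(H)` is a cover graph if and only if `G` or `H` is bipartite. -/
theorem tensorProd_myc_isCoverGraph_iff {α β : Type*} [Fintype α] [Fintype β]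
    (G : SimpleGraph α) (H : SimpleGraph β) (m n : ℕ) (hm : 1 ≤ m) (hn : 1 ≤ n) :
    ((SimpleGraph.Myc m G).tensorProd (SimpleGraph.Myc n H)).IsCoverGraph ↔
      G.Colorable 2 ∨ H.Colorable 2 := by
  classical
  set P2 := (SimpleGraph.Myc m G).tensorProd (SimpleGraph.Myc n H) with hP2
  constructor
  · -- cover graph → G or H bipartite
    intro hCov
    by_contra hne
    push_neg at hne
    obtain ⟨hG, hH⟩ := hne
    obtain ⟨a, g, ha, hga, hgadj⟩ := exists_odd_closed_walk hG
    obtain ⟨b, h, hb, hhb, hhadj⟩ := exists_odd_closed_walk hH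
    obtain ⟨p, hp⟩ := hCov
    letI := p
    have hp' : ∀ x y, P2.Adj x y ↔ x ⋖ y ∨ y ⋖ x := hp
    set ℓ := 2 * m + 2 * n + 3 with hℓdef
    have hodd : ℓ % 2 = 1 := by omega
    have hl3 : 3 ≤ ℓ := by omega
    have hℓm : 2 * m + 3 ≤ ℓ := by omega
    have hℓn : 2 * n + 3 ≤ ℓ := by omega
    -- pair-walk builder
    set PW : (ℕ → α) → (ℕ → β) → ℕ → (Option (Fin (m + 1) × α) × Option (Fin (n + 1) × β)) :=
      fun γ δ i => (pat m ℓ γ i, pat n ℓ δ i) with hPW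
    have hPWadj : ∀ (γ : ℕ → α) (δ : ℕ → β),
        (∀ i, 1 ≤ i → i + 1 ≤ ℓ - 1 → G.Adj (γ i) (γ (i + 1))) →
        (∀ i, 1 ≤ i → i + 1 ≤ ℓ - 1 → H.Adj (δ i) (δ (i + 1))) →
        ∀ i < ℓ, P2.Adj (PW γ δ i) (PW γ δ (i + 1)) := by
      intro γ δ hγ hδ i hi
      exact ⟨pat_adj hℓm γ hγ i hi, pat_adj hℓn δ hδ i hi⟩
    -- crawl in the first coordinate
    have crawl1 : ssum ℓ (PW (bnc (g 0) (g 1)) (bnc (h 0) (h 1))) =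
        ssum ℓ (PW (bnc (g 1) (g 0)) (bnc (h 0) (h 1))) := by
      refine crawl hp' (W := fun γ => PW γ (bnc (h 0) (h 1))) (G' := G)
        ?_ ?_ ?_ hodd hl3 ha hgadj hga
      · intro γ γ' i he
        show (pat m ℓ γ i, _) = (pat m ℓ γ' i, _)
        rw [pat_ptwise γ γ' i he]
      · intro γ hγ i hi
        exact hPWadj γ _ hγ (fun i _ _ => bnc_adj (hhadj 0 (by omega)) i) i hi
      · intro γ γ'
        constructor
        · show (pat m ℓ γ 0, pat n ℓ (bnc (h 0) (h 1)) 0) =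
            (pat m ℓ γ' 0, pat n ℓ (bnc (h 0) (h 1)) 0)
          simp only [pat_zero]
        · show (pat m ℓ γ ℓ, pat n ℓ (bnc (h 0) (h 1)) ℓ) =
            (pat m ℓ γ' ℓ, pat n ℓ (bnc (h 0) (h 1)) ℓ)
          simp only [pat_last]
    -- crawl in the second coordinate
    have crawl2 : ssum ℓ (PW (bnc (g 1) (g 0)) (bnc (h 0) (h 1))) =
        ssum ℓ (PW (bnc (g 1) (g 0)) (bnc (h 1) (h 0))) := by
      refine crawl hp' (W := fun δ => PW (bnc (g 1) (g 0)) δ) (G' := H)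
        ?_ ?_ ?_ hodd hl3 hb hhadj hhb
      · intro δ δ' i he
        show (_, pat n ℓ δ i) = (_, pat n ℓ δ' i)
        rw [pat_ptwise δ δ' i he]
      · intro δ hδ i hi
        exact hPWadj _ δ (fun i _ _ => bnc_adj ((hgadj 0 (by omega)).symm) i) hδ i hi
      · intro δ δ'
        constructor
        · show (pat m ℓ (bnc (g 1) (g 0)) 0, pat n ℓ δ 0) =
            (pat m ℓ (bnc (g 1) (g 0)) 0, pat n ℓ δ' 0)
          simp only [pat_zero]
        · show (pat m ℓ (bnc (g 1) (g 0)) ℓ, pat n ℓ δ ℓ) =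
            (pat m ℓ (bnc (g 1) (g 0)) ℓ, pat n ℓ δ' ℓ)
          simp only [pat_last]
    -- reversal
    set f₀ := PW (bnc (g 0) (g 1)) (bnc (h 0) (h 1)) with hf₀
    set f₂ := PW (bnc (g 1) (g 0)) (bnc (h 1) (h 0)) with hf₂
    have hf₂walk : ∀ i < ℓ, P2.Adj (f₂ i) (f₂ (i + 1)) :=
      hPWadj _ _ (fun i _ _ => bnc_adj ((hgadj 0 (by omega)).symm) i)
        (fun i _ _ => bnc_adj ((hhadj 0 (by omega)).symm) i)
    have hrev : ssum ℓ (fun i => f₂ (ℓ - i)) = - ssum ℓ f₂ :=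
      ssum_reverse hp' ℓ f₂ hf₂walk
    have hreveq : ssum ℓ (fun i => f₂ (ℓ - i)) = ssum ℓ f₀ := by
      refine ssum_congr fun i hi => ?_
      show (pat m ℓ (bnc (g 1) (g 0)) (ℓ - i), pat n ℓ (bnc (h 1) (h 0)) (ℓ - i)) = _
      rw [pat_reflect (by omega) _ i hi, pat_reflect (by omega) _ i hi]
      have e1 : (fun j => bnc (g 1) (g 0) (ℓ - j)) i = bnc (g 0) (g 1) i := by
        show bnc (g 1) (g 0) (ℓ - i) = bnc (g 0) (g 1) i
        unfold bnc
        split_ifs <;> first | rfl | omega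
      have e2 : (fun j => bnc (h 1) (h 0) (ℓ - j)) i = bnc (h 0) (h 1) i := by
        show bnc (h 1) (h 0) (ℓ - i) = bnc (h 0) (h 1) i
        unfold bnc
        split_ifs <;> first | rfl | omega
      rw [pat_ptwise (m := m) _ _ i e1, pat_ptwise (m := n) _ _ i e2]
    have hzero : ssum ℓ f₀ = 0 := by
      have h1 : ssum ℓ f₀ = ssum ℓ f₂ := crawl1.trans crawl2
      have h2 : ssum ℓ f₀ = - ssum ℓ f₂ := hreveq.symm.trans hrev
      linarith
    have hpar := ssum_parity ℓ f₀
    rw [hzero] at hpar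
    have : ((ℓ : ℕ) : ZMod 2) = 1 := by
      rw [← ZMod.natCast_mod, hodd]
      norm_num
    rw [this] at hpar
    norm_num at hpar
  · -- G or H bipartite → cover graph
    rintro (hc | hc)
    · obtain C := hc.some
      refine cover_of_gradelike (P := P2) (F := fun x => phi m C x.1) ?_ ?_ ?_
      · intro u v huv
        exact (phi_A C hm u.1 v.1 huv.1).1
      · intro u v huv hlt
        exact (phi_A C hm u.1 v.1 huv.1).2 hlt
      · intro u v w huv h2 huw hwv
        exact phi_B C hm u.1 v.1 w.1 huv.1 h2 huw.1 hwv.1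
    · obtain C := hc.some
      refine cover_of_gradelike (P := P2) (F := fun x => phi n C x.2) ?_ ?_ ?_
      · intro u v huv
        exact (phi_A C hn u.2 v.2 huv.2).1
      · intro u v huv hlt
        exact (phi_A C hn u.2 v.2 huv.2).2 hlt
      · intro u v w huv h2 huw hwv
        exact phi_B C hn u.2 v.2 w.2 huv.2 h2 huw.2 hwv.2
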